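/- Let A be a reduced Noetherian ring, J ⊆ A an ideal containing a non-zerodivisor p on A. Then the colon ideal pJ :_A J contains p, and the A-submodule (1/p)(pJ :_A J) of Q(A) is a subring of Q(A) containing A which is integral over A and contained in the integral closure A̅ of A in Q(A). -/

import Mathlib

set_option synthInstance.maxHeartbeats 1000000
set_option maxHeartbeats 1000000

open Pointwise

/-- For a reduced Noetherian ring `A` and an ideal `J` containing a
non-zerodivisor `p`: `p ∈ pJ :_A J`, and `(1/p)(pJ :_A J) ⊆ Q(A)` is a subring of `Q(A)`
containing `A` (i.e. an `A`-subalgebra) that is contained in the integral closure of `A`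
in `Q(A)`. -/
theorem ring_structure_of_quotient
    (A : Type*) [CommRing A] [IsReduced A] [IsNoetherianRing A]
    (J : Ideal A) (p : A) (hp : p ∈ nonZeroDivisors A) (hpJ : p ∈ J) :
    p ∈ Submodule.colon (p • J) J ∧
    ∃ S : Subalgebra A (FractionRing A),
      (S : Set (FractionRing A)) =
        {x : FractionRing A | algebraMap A (FractionRing A) p * x ∈
          Submodule.map (Algebra.linearMap A (FractionRing A)) (Submodule.colon (p • J) J)} ∧
      (S : Set (FractionRing A)) ⊆ (integralClosure A (FractionRing A) : Set (FractionRing A)) := by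
  classical
  set K := FractionRing A with hK
  set f : A →+* K := algebraMap A K with hf
  set C : Ideal A := Submodule.colon (p • J) J with hC
  -- membership in `p • J`
  have hmem : ∀ x : A, x ∈ (p • J : Ideal A) ↔ ∃ j ∈ J, p * j = x := by
    intro x
    rw [← SetLike.mem_coe, Submodule.coe_pointwise_smul, Set.mem_smul_set]
    simp only [SetLike.mem_coe, smul_eq_mul]
  have hCmem : ∀ a : A, a ∈ C ↔ ∀ j ∈ J, a * j ∈ (p • J : Ideal A) := by
    intro a
    rw [hC, Submodule.mem_colon]
    simp [smul_eq_mul]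
  -- part 1 : p ∈ C
  have hpC : p ∈ C := by
    rw [hCmem]
    intro j hj
    exact (hmem _).mpr ⟨j, hj, rfl⟩
  refine ⟨hpC, ?_⟩
  -- basic facts
  have hpu : IsUnit (f p) := IsLocalization.map_units K ⟨p, hp⟩
  have hcancelA : ∀ a b : A, p * a = p * b → a = b := by
    intro a b h
    have h0 : (a - b) * p = 0 := by linear_combination h
    exact sub_eq_zero.mp (hp.2 _ h0)
  have hcancelK : ∀ x y : K, f p * x = f p * y → x = y := fun x y h =>
    hpu.mul_left_cancel h
  -- C ⊆ J
  have hCJ : ∀ a ∈ C, a ∈ J := by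
    intro a ha
    obtain ⟨j, hj, hjp⟩ := (hmem _).mp ((hCmem a).mp ha p hpJ)
    have : a = j := hcancelA a j (by linear_combination -hjp)
    exact this ▸ hj
  -- the image submodule
  set N : Submodule A K := Submodule.map (Algebra.linearMap A K) C with hN
  have hNmem : ∀ x : K, x ∈ N ↔ ∃ a ∈ C, f a = x := by
    intro x; rw [hN, Submodule.mem_map]; rfl
  -- the carrier condition
  set T : Set K := {x : K | f p * x ∈ N} with hT
  -- closure facts
  have h_algmem : ∀ r : A, f r ∈ T := by
    intro r
    refine (hNmem _).mpr ⟨p * r, ?_, by rw [map_mul]⟩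
    rw [hCmem]
    intro j hj
    exact (hmem _).mpr ⟨r * j, J.mul_mem_left r hj, by ring⟩
  have h_mul : ∀ x y : K, x ∈ T → y ∈ T → x * y ∈ T := by
    intro x y hx hy
    obtain ⟨a, haC, hax⟩ := (hNmem _).mp hx
    obtain ⟨b, hbC, hby⟩ := (hNmem _).mp hy
    -- a * b = p * c with c ∈ C
    have hbJ : b ∈ J := hCJ b hbC
    obtain ⟨c, hcJ, hpc⟩ := (hmem _).mp ((hCmem a).mp haC b hbJ)
    have hcC : c ∈ C := by
      rw [hCmem]
      intro j hj
      obtain ⟨j', hj', hj'e⟩ := (hmem _).mp ((hCmem b).mp hbC j hj)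
      obtain ⟨j'', hj'', hj''e⟩ := (hmem _).mp ((hCmem a).mp haC j' hj')
      refine (hmem _).mpr ⟨j'', hj'', hcancelA _ _ ?_⟩
      -- p * (p * j'') = p * (c * j)
      calc p * (p * j'') = a * (p * j') := by rw [hj''e]; ring
        _ = a * (b * j) := by rw [hj'e]
        _ = (p * c) * j := by rw [hpc]; ring
        _ = p * (c * j) := by ring
    refine (hNmem _).mpr ⟨c, hcC, hcancelK _ _ ?_⟩
    calc f p * f c = f (p * c) := by rw [map_mul]
      _ = f a * f b := by rw [hpc, map_mul]
      _ = (f p * x) * (f p * y) := by rw [hax, hby]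
      _ = f p * (f p * (x * y)) := by ring
  have h_add : ∀ x y : K, x ∈ T → y ∈ T → x + y ∈ T := by
    intro x y hx hy
    obtain ⟨a, haC, hax⟩ := (hNmem _).mp hx
    obtain ⟨b, hbC, hby⟩ := (hNmem _).mp hy
    exact (hNmem _).mpr ⟨a + b, C.add_mem haC hbC, by rw [map_add, hax, hby]; ring⟩
  -- build the subalgebra
  set S : Subalgebra A K :=
    { carrier := T
      mul_mem' := fun hx hy => h_mul _ _ hx hy
      add_mem' := fun hx hy => h_add _ _ hx hy
      one_mem' := by simpa using h_algmem 1
      zero_mem' := by simpa using h_algmem 0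
      algebraMap_mem' := h_algmem } with hS
  refine ⟨S, rfl, ?_⟩
  -- S is finitely generated as an A-module
  have hNfg : N.FG := (IsNoetherian.noetherian C).map _
  set v : K := ↑hpu.unit⁻¹ with hv
  have hvp : f p * v = 1 := by
    exact hpu.mul_val_inv
  have hSmod : Subalgebra.toSubmodule S = N.map (LinearMap.mulLeft A v) := by
    ext x
    simp only [Subalgebra.mem_toSubmodule, Submodule.mem_map, LinearMap.mulLeft_apply]
    constructor
    · intro hx
      exact ⟨f p * x, hx, by rw [← mul_assoc, mul_comm v (f p), hvp, one_mul]⟩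
    · rintro ⟨n, hn, rfl⟩
      show f p * (v * n) ∈ N
      rw [← mul_assoc, hvp, one_mul]
      exact hn
  have hSfg : (Subalgebra.toSubmodule S).FG := by
    rw [hSmod]; exact hNfg.map _
  intro x hx
  exact IsIntegral.of_mem_of_fg S hSfg x hx
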